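/- arXiv:1903.07915 — 3 statements merged into one kernel-verified Lean document; each statement's English description precedes it below -/
import Mathlib

section
/- If a probability measure μ on ℝ^d satisfies the Gaussian concentration bound with constant D (i.e., log ∫ e^{f - μ(f)} dμ ≤ D·Lip(f)² for all Lipschitz f), then there exists x₀ ∈ ℝ^d such that ∫ exp(‖x - x₀‖²/(16D)) dμ(x) ≤ 3·exp(m²/D), where m = ∫ ‖x - x₀‖ dμ(x). -/
open MeasureTheory Real ENNReal NNReal

lemma gcb_step_aux {d : ℕ} (μ : Measure (EuclideanSpace ℝ (Fin d))) [IsProbabilityMeasure μ]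
    (D : ℝ)
    (hInt : Integrable (fun x => ‖x‖) μ)
    (hGCB : ∀ (L : NNReal) (f : EuclideanSpace ℝ (Fin d) → ℝ), LipschitzWith L f →
      ∫ x, Real.exp (f x - ∫ y, f y ∂μ) ∂μ ≤ Real.exp (D * (L : ℝ) ^ 2))
    (l : ℝ) (hl : 0 ≤ l) (N : ℕ) :
    ∫⁻ x, ENNReal.ofReal (Real.exp (l * min ‖x‖ (N : ℝ))) ∂μ ≤
      ENNReal.ofReal (Real.exp (D * l ^ 2 + l * (∫ x, ‖x‖ ∂μ))) := by
  set m : ℝ := ∫ x, ‖x‖ ∂μ with hm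
  set f : EuclideanSpace ℝ (Fin d) → ℝ := fun x => l * min ‖x‖ (N : ℝ) with hf
  have h1 : LipschitzWith 1 (fun x : EuclideanSpace ℝ (Fin d) => min ‖x‖ (N : ℝ)) := by
    simpa using lipschitzWith_one_norm.min (LipschitzWith.const' (α := EuclideanSpace ℝ (Fin d)) (K := 1) (N : ℝ))
  have hlip : LipschitzWith ‖l‖₊ f := by
    have := (lipschitzWith_smul (β := ℝ) l).comp h1
    simpa [hf, Function.comp_def, smul_eq_mul] using this
  have key := hGCB ‖l‖₊ f hlip
  rw [show ((‖l‖₊ : ℝ)) = l by simp [Real.norm_eq_abs, abs_of_nonneg hl]] at key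
  set c : ℝ := ∫ y, f y ∂μ with hc
  -- integrability facts
  have hfc : Continuous f := hlip.continuous
  have hfInt : Integrable f μ := by
    refine (hInt.const_mul l).mono' (hfc.aestronglyMeasurable) ?_
    filter_upwards with x
    rw [Real.norm_eq_abs, hf, abs_mul, abs_of_nonneg hl,
      abs_of_nonneg (le_min (norm_nonneg x) (Nat.cast_nonneg N))]
    exact mul_le_mul_of_nonneg_left (min_le_left _ _) hl
  have hgInt : Integrable (fun x => Real.exp (f x - c)) μ := by
    refine (integrable_const (Real.exp (l * N - c))).mono'
      ((Real.continuous_exp.comp (hfc.sub continuous_const)).aestronglyMeasurable) ?_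
    filter_upwards with x
    rw [Real.norm_eq_abs, abs_of_nonneg (Real.exp_nonneg _)]
    refine Real.exp_le_exp.mpr (sub_le_sub_right ?_ _)
    exact mul_le_mul_of_nonneg_left (min_le_right _ _) hl
  have hcm : c ≤ l * m := by
    rw [hc, hm, ← integral_const_mul]
    refine integral_mono hfInt (hInt.const_mul l) fun x => ?_
    exact mul_le_mul_of_nonneg_left (min_le_left _ _) hl
  calc ∫⁻ x, ENNReal.ofReal (Real.exp (f x)) ∂μ
      = ∫⁻ x, ENNReal.ofReal (Real.exp c) * ENNReal.ofReal (Real.exp (f x - c)) ∂μ := by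
        refine lintegral_congr fun x => ?_
        rw [← ENNReal.ofReal_mul (Real.exp_nonneg _), ← Real.exp_add]
        ring_nf
    _ = ENNReal.ofReal (Real.exp c) * ∫⁻ x, ENNReal.ofReal (Real.exp (f x - c)) ∂μ :=
        lintegral_const_mul' _ _ ENNReal.ofReal_ne_top
    _ = ENNReal.ofReal (Real.exp c) * ENNReal.ofReal (∫ x, Real.exp (f x - c) ∂μ) := by
        rw [← ofReal_integral_eq_lintegral_ofReal hgInt
          (Filter.Eventually.of_forall fun x => Real.exp_nonneg _)]
    _ ≤ ENNReal.ofReal (Real.exp c) * ENNReal.ofReal (Real.exp (D * l ^ 2)) := by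
        gcongr
    _ = ENNReal.ofReal (Real.exp (c + D * l ^ 2)) := by
        rw [← ENNReal.ofReal_mul (Real.exp_nonneg _), ← Real.exp_add]
    _ ≤ _ := by
        refine ENNReal.ofReal_le_ofReal (Real.exp_le_exp.mpr ?_)
        linarith

lemma gcb_mgf_aux {d : ℕ} (μ : Measure (EuclideanSpace ℝ (Fin d))) [IsProbabilityMeasure μ]
    (D : ℝ) (hD : 0 < D)
    (hInt : Integrable (fun x => ‖x‖) μ)
    (hGCB : ∀ (L : NNReal) (f : EuclideanSpace ℝ (Fin d) → ℝ), LipschitzWith L f →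
      ∫ x, Real.exp (f x - ∫ y, f y ∂μ) ∂μ ≤ Real.exp (D * (L : ℝ) ^ 2)) (l : ℝ) :
    ∫⁻ x, ENNReal.ofReal (Real.exp (l * ‖x‖)) ∂μ ≤
      ENNReal.ofReal (Real.exp (D * l ^ 2 + |l| * (∫ x, ‖x‖ ∂μ))) := by
  set m : ℝ := ∫ x, ‖x‖ ∂μ with hm
  have hm0 : 0 ≤ m := integral_nonneg fun x => norm_nonneg x
  rcases lt_or_ge l 0 with hl | hl
  · calc ∫⁻ x, ENNReal.ofReal (Real.exp (l * ‖x‖)) ∂μ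
        ≤ ∫⁻ x, 1 ∂μ := by
          refine lintegral_mono fun x => ?_
          have h1 : Real.exp (l * ‖x‖) ≤ 1 := by
            rw [Real.exp_le_one_iff]
            exact mul_nonpos_of_nonpos_of_nonneg hl.le (norm_nonneg x)
          simpa using ENNReal.ofReal_le_ofReal h1
      _ = 1 := by simp
      _ ≤ _ := by
          rw [show (1 : ℝ≥0∞) = ENNReal.ofReal (Real.exp 0) by simp]
          refine ENNReal.ofReal_le_ofReal (Real.exp_le_exp.mpr ?_)
          positivity
  · have habs : |l| = l := abs_of_nonneg hl
    rw [habs]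
    have hpt : ∀ x : EuclideanSpace ℝ (Fin d), ENNReal.ofReal (Real.exp (l * ‖x‖)) =
        ⨆ N : ℕ, ENNReal.ofReal (Real.exp (l * min ‖x‖ (N : ℝ))) := by
      intro x
      refine le_antisymm ?_ (iSup_le fun N => ?_)
      · refine le_iSup_of_le ⌈‖x‖⌉₊ ?_
        rw [min_eq_left (Nat.le_ceil _)]
      · exact ENNReal.ofReal_le_ofReal (Real.exp_le_exp.mpr
          (mul_le_mul_of_nonneg_left (min_le_left _ _) hl))
    calc ∫⁻ x, ENNReal.ofReal (Real.exp (l * ‖x‖)) ∂μ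
        = ∫⁻ x, ⨆ N : ℕ, ENNReal.ofReal (Real.exp (l * min ‖x‖ (N : ℝ))) ∂μ :=
          lintegral_congr hpt
      _ = ⨆ N : ℕ, ∫⁻ x, ENNReal.ofReal (Real.exp (l * min ‖x‖ (N : ℝ))) ∂μ := by
          refine lintegral_iSup (fun N => ?_) (fun N M hNM x => ?_)
          · exact ((Real.continuous_exp.comp
              (continuous_const.mul (continuous_norm.min continuous_const))).measurable).ennreal_ofReal
          · refine ENNReal.ofReal_le_ofReal (Real.exp_le_exp.mpr
              (mul_le_mul_of_nonneg_left (min_le_min le_rfl (Nat.cast_le.mpr hNM)) hl))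
      _ ≤ _ := iSup_le fun N => gcb_step_aux μ D hInt hGCB l hl N

lemma gauss_id_aux (D t : ℝ) (hD : 0 < D) :
    ENNReal.ofReal (Real.exp (t ^ 2 / (16 * D))) =
      ENNReal.ofReal (Real.sqrt (4 * D / π)) *
        ∫⁻ l : ℝ, ENNReal.ofReal (Real.exp (t * l - 4 * D * l ^ 2)) := by
  have h4D : (0 : ℝ) < 4 * D := by linarith
  have hpt : ∀ l : ℝ, t * l - 4 * D * l ^ 2 =
      t ^ 2 / (16 * D) + (-(4 * D) * (l - t / (8 * D)) ^ 2) := by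
    intro l; field_simp; ring
  have hIntG : Integrable (fun l : ℝ => Real.exp (-(4 * D) * l ^ 2)) :=
    integrable_exp_neg_mul_sq h4D
  have hInt1 : Integrable (fun l : ℝ => Real.exp (t * l - 4 * D * l ^ 2)) := by
    refine ((hIntG.comp_sub_right (t / (8 * D))).const_mul
      (Real.exp (t ^ 2 / (16 * D)))).congr ?_
    filter_upwards with l
    rw [← Real.exp_add, ← hpt l]
  have hval : ∫ l : ℝ, Real.exp (t * l - 4 * D * l ^ 2) =
      Real.exp (t ^ 2 / (16 * D)) * Real.sqrt (π / (4 * D)) := by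
    calc ∫ l : ℝ, Real.exp (t * l - 4 * D * l ^ 2)
        = ∫ l : ℝ, Real.exp (t ^ 2 / (16 * D)) *
            Real.exp (-(4 * D) * (l - t / (8 * D)) ^ 2) := by
          refine integral_congr_ae (Filter.Eventually.of_forall fun l => ?_)
          show rexp _ = rexp _ * rexp _; rw [← Real.exp_add, ← hpt l]
      _ = Real.exp (t ^ 2 / (16 * D)) *
            ∫ l : ℝ, Real.exp (-(4 * D) * (l - t / (8 * D)) ^ 2) := integral_const_mul _ _
      _ = Real.exp (t ^ 2 / (16 * D)) * ∫ l : ℝ, Real.exp (-(4 * D) * l ^ 2) := by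
          rw [integral_sub_right_eq_self (fun l : ℝ => Real.exp (-(4 * D) * l ^ 2))
            (t / (8 * D))]
      _ = Real.exp (t ^ 2 / (16 * D)) * Real.sqrt (π / (4 * D)) := by
          rw [integral_gaussian]
  rw [← ofReal_integral_eq_lintegral_ofReal hInt1
    (Filter.Eventually.of_forall fun l => Real.exp_nonneg _), hval,
    ← ENNReal.ofReal_mul (Real.sqrt_nonneg _)]
  congr 1
  rw [show Real.sqrt (4 * D / π) * (Real.exp (t ^ 2 / (16 * D)) * Real.sqrt (π / (4 * D)))
    = Real.sqrt (4 * D / π) * Real.sqrt (π / (4 * D)) * Real.exp (t ^ 2 / (16 * D)) by ring,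
    ← Real.sqrt_mul (by positivity)]
  have : 4 * D / π * (π / (4 * D)) = 1 := by
    field_simp
  rw [this, Real.sqrt_one, one_mul]

/-- If a probability measure on ℝ^d satisfies the Gaussian concentration bound with
constant `D`, then there exists `x₀` such that
`∫ exp(‖x-x₀‖²/(16D)) dμ ≤ 3 exp(m²/D)` with `m = ∫ ‖x-x₀‖ dμ`. -/
theorem gcb_implies_gaussian_moment {d : ℕ}
    (μ : Measure (EuclideanSpace ℝ (Fin d))) [IsProbabilityMeasure μ]
    (D : ℝ) (hD : 0 < D)
    (hInt : Integrable (fun x => ‖x‖) μ)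
    (hGCB : ∀ (L : NNReal) (f : EuclideanSpace ℝ (Fin d) → ℝ), LipschitzWith L f →
      ∫ x, Real.exp (f x - ∫ y, f y ∂μ) ∂μ ≤ Real.exp (D * (L : ℝ) ^ 2)) :
    ∃ x₀ : EuclideanSpace ℝ (Fin d),
      ∫⁻ x, ENNReal.ofReal (Real.exp (‖x - x₀‖ ^ 2 / (16 * D))) ∂μ ≤
        ENNReal.ofReal (3 * Real.exp ((∫ x, ‖x - x₀‖ ∂μ) ^ 2 / D)) := by
  refine ⟨0, ?_⟩
  simp only [sub_zero]
  set m : ℝ := ∫ x, ‖x‖ ∂μ with hm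
  have hm0 : 0 ≤ m := integral_nonneg fun x => norm_nonneg x
  set c : ℝ := Real.sqrt (4 * D / π) with hc
  -- inner bound for each l
  have inner : ∀ l : ℝ, ∫⁻ x, ENNReal.ofReal (Real.exp (‖x‖ * l - 4 * D * l ^ 2)) ∂μ ≤
      ENNReal.ofReal (Real.exp (m ^ 2 / (8 * D))) * ENNReal.ofReal (Real.exp (-D * l ^ 2)) := by
    intro l
    have hsplit : ∀ x : EuclideanSpace ℝ (Fin d),
        ENNReal.ofReal (Real.exp (‖x‖ * l - 4 * D * l ^ 2)) =
          ENNReal.ofReal (Real.exp (-(4 * D) * l ^ 2)) *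
            ENNReal.ofReal (Real.exp (l * ‖x‖)) := by
      intro x
      rw [← ENNReal.ofReal_mul (Real.exp_nonneg _), ← Real.exp_add]
      ring_nf
    calc ∫⁻ x, ENNReal.ofReal (Real.exp (‖x‖ * l - 4 * D * l ^ 2)) ∂μ
        = ENNReal.ofReal (Real.exp (-(4 * D) * l ^ 2)) *
            ∫⁻ x, ENNReal.ofReal (Real.exp (l * ‖x‖)) ∂μ := by
          rw [← lintegral_const_mul' _ _ ENNReal.ofReal_ne_top]
          exact lintegral_congr hsplit
      _ ≤ ENNReal.ofReal (Real.exp (-(4 * D) * l ^ 2)) *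
            ENNReal.ofReal (Real.exp (D * l ^ 2 + |l| * m)) := by
          gcongr
          exact gcb_mgf_aux μ D hD hInt hGCB l
      _ = ENNReal.ofReal (Real.exp (-(4 * D) * l ^ 2 + (D * l ^ 2 + |l| * m))) := by
          rw [← ENNReal.ofReal_mul (Real.exp_nonneg _), ← Real.exp_add]
      _ ≤ ENNReal.ofReal (Real.exp (m ^ 2 / (8 * D) + -D * l ^ 2)) := by
          refine ENNReal.ofReal_le_ofReal (Real.exp_le_exp.mpr ?_)
          have hl2 : l ^ 2 = |l| ^ 2 := (sq_abs l).symm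
          rw [hl2]
          have hkey : m ^ 2 / (8 * D) + -D * |l| ^ 2 -
              (-(4 * D) * |l| ^ 2 + (D * |l| ^ 2 + |l| * m)) =
              (4 * D * |l| - m) ^ 2 / (8 * D) := by
            field_simp
            ring
          nlinarith [div_nonneg (sq_nonneg (4 * D * |l| - m)) (by linarith : (0:ℝ) ≤ 8 * D)]
      _ = _ := by
          rw [← ENNReal.ofReal_mul (Real.exp_nonneg _), ← Real.exp_add]
  have hprodmeas : AEMeasurable
      (fun p : EuclideanSpace ℝ (Fin d) × ℝ =>
        ENNReal.ofReal (Real.exp (‖p.1‖ * p.2 - 4 * D * p.2 ^ 2))) (μ.prod volume) := by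
    refine (ENNReal.continuous_ofReal.comp (Real.continuous_exp.comp ?_)).measurable.aemeasurable
    exact ((continuous_norm.comp continuous_fst).mul continuous_snd).sub
      (continuous_const.mul (continuous_snd.pow 2))
  calc ∫⁻ x, ENNReal.ofReal (Real.exp (‖x‖ ^ 2 / (16 * D))) ∂μ
      = ∫⁻ x, (ENNReal.ofReal c *
          ∫⁻ l : ℝ, ENNReal.ofReal (Real.exp (‖x‖ * l - 4 * D * l ^ 2))) ∂μ :=
        lintegral_congr fun x => gauss_id_aux D ‖x‖ hD
    _ = ENNReal.ofReal c *
          ∫⁻ x, (∫⁻ l : ℝ, ENNReal.ofReal (Real.exp (‖x‖ * l - 4 * D * l ^ 2))) ∂μ :=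
        lintegral_const_mul' _ _ ENNReal.ofReal_ne_top
    _ = ENNReal.ofReal c *
          ∫⁻ l : ℝ, ∫⁻ x, ENNReal.ofReal (Real.exp (‖x‖ * l - 4 * D * l ^ 2)) ∂μ := by
        rw [lintegral_lintegral_swap hprodmeas]
    _ ≤ ENNReal.ofReal c * ∫⁻ l : ℝ, ENNReal.ofReal (Real.exp (m ^ 2 / (8 * D))) *
          ENNReal.ofReal (Real.exp (-D * l ^ 2)) := by
        gcongr with l
        exact inner l
    _ = ENNReal.ofReal c * (ENNReal.ofReal (Real.exp (m ^ 2 / (8 * D))) *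
          ∫⁻ l : ℝ, ENNReal.ofReal (Real.exp (-D * l ^ 2))) := by
        rw [lintegral_const_mul' _ _ ENNReal.ofReal_ne_top]
    _ = ENNReal.ofReal c * (ENNReal.ofReal (Real.exp (m ^ 2 / (8 * D))) *
          ENNReal.ofReal (Real.sqrt (π / D))) := by
        rw [← ofReal_integral_eq_lintegral_ofReal (integrable_exp_neg_mul_sq hD)
          (Filter.Eventually.of_forall fun l => Real.exp_nonneg _), integral_gaussian]
    _ = ENNReal.ofReal (c * Real.sqrt (π / D) * Real.exp (m ^ 2 / (8 * D))) := by
        rw [← ENNReal.ofReal_mul (Real.exp_nonneg _), ← ENNReal.ofReal_mul (by positivity)]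
        ring_nf
    _ ≤ ENNReal.ofReal (3 * Real.exp (m ^ 2 / D)) := by
        refine ENNReal.ofReal_le_ofReal ?_
        have hcs : c * Real.sqrt (π / D) = 2 := by
          rw [hc, ← Real.sqrt_mul (by positivity)]
          rw [show 4 * D / π * (π / D) = 4 by field_simp]
          rw [show (4 : ℝ) = 2 ^ 2 by norm_num, Real.sqrt_sq (by norm_num)]
        rw [hcs]
        have hexp : Real.exp (m ^ 2 / (8 * D)) ≤ Real.exp (m ^ 2 / D) := by
          refine Real.exp_le_exp.mpr
            (div_le_div_of_nonneg_left (sq_nonneg m) hD (by linarith))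
        nlinarith [Real.exp_pos (m ^ 2 / (8 * D))]
end

section
/- If a probability measure μ on a separable metric space (Ω,d) satisfies ∫ e^{a·d(x₀,x)²} dμ(x) ≤ b for some point x₀, some a > 0 and b ≥ 1, then μ satisfies the Gaussian concentration bound with constant D = (1/(2a))·max(1, b²e/(2√π)), i.e., ∫ e^{f - μ(f)} dμ ≤ e^{D·Lip(f)²} for all Lipschitz f. -/
open MeasureTheory Real


private lemma sinh_nn {x : ℝ} (hx : 0 ≤ x) : 0 ≤ Real.sinh x := Real.sinh_nonneg_iff.mpr hx

private lemma nonneg_of_deriv {F F' : ℝ → ℝ} (h0 : 0 ≤ F 0)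
    (hF : ∀ x, HasDerivAt F (F' x) x) (hF' : ∀ x, 0 < x → 0 ≤ F' x) :
    ∀ y, 0 ≤ y → 0 ≤ F y := by
  intro y hy
  have hdiff : Differentiable ℝ F := fun x => (hF x).differentiableAt
  have hmono : MonotoneOn F (Set.Ici (0:ℝ)) := by
    apply monotoneOn_of_deriv_nonneg (convex_Ici 0) hdiff.continuous.continuousOn
      (fun x _ => (hdiff x).differentiableWithinAt)
    intro x hx
    rw [interior_Ici] at hx
    rw [(hF x).deriv]
    exact hF' x hx
  exact le_trans h0 (hmono (Set.mem_Ici.mpr le_rfl) (Set.mem_Ici.mpr hy) hy)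

private lemma lad1 {y : ℝ} (hy : 0 ≤ y) : Real.sinh y ≤ y * Real.cosh y := by
  have h := nonneg_of_deriv (F := fun t => t * Real.cosh t - Real.sinh t)
    (F' := fun t => t * Real.sinh t) (by simp)
    (fun x => by
      have h1 := ((hasDerivAt_id x).mul (Real.hasDerivAt_cosh x)).sub (Real.hasDerivAt_sinh x)
      refine h1.congr_deriv ?_; simp)
    (fun x hx => mul_nonneg hx.le (sinh_nn hx.le)) y hy
  have h' : 0 ≤ y * Real.cosh y - Real.sinh y := h
  linarith

private lemma lad2 {y : ℝ} (hy : 0 ≤ y) : Real.cosh y - 1 ≤ y^2/2 * Real.cosh y := by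
  have h := nonneg_of_deriv (F := fun t => t^2/2 * Real.cosh t + 1 - Real.cosh t)
    (F' := fun t => (t * Real.cosh t - Real.sinh t) + t^2/2 * Real.sinh t) (by simp)
    (fun x => by
      have h1 := ((((hasDerivAt_pow 2 x).div_const 2).mul (Real.hasDerivAt_cosh x)).add
        (hasDerivAt_const x 1)).sub (Real.hasDerivAt_cosh x)
      refine h1.congr_deriv ?_; simp; ring)
    (fun x hx => add_nonneg (by linarith [lad1 hx.le])
      (mul_nonneg (by positivity) (sinh_nn hx.le))) y hy
  have h' : 0 ≤ y^2/2 * Real.cosh y + 1 - Real.cosh y := h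
  linarith

private lemma lad6 {y : ℝ} (hy : 0 ≤ y) : Real.sinh y ≤ y + y^3/6 * Real.cosh y := by
  have h := nonneg_of_deriv (F := fun t => t^3/6 * Real.cosh t + t - Real.sinh t)
    (F' := fun t => (t^2/2 * Real.cosh t + 1 - Real.cosh t) + t^3/6 * Real.sinh t) (by simp)
    (fun x => by
      have h1 := ((((hasDerivAt_pow 3 x).div_const 6).mul (Real.hasDerivAt_cosh x)).add
        (hasDerivAt_id x)).sub (Real.hasDerivAt_sinh x)
      refine h1.congr_deriv ?_; simp; ring)
    (fun x hx => add_nonneg (by linarith [lad2 hx.le])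
      (mul_nonneg (by positivity) (sinh_nn hx.le))) y hy
  have h' : 0 ≤ y^3/6 * Real.cosh y + y - Real.sinh y := h
  linarith

private lemma lad5 {y : ℝ} (hy : 0 ≤ y) :
    Real.cosh y ≤ 1 + y^2/2 + y^4/24 * Real.cosh y := by
  have h := nonneg_of_deriv (F := fun t => t^4/24 * Real.cosh t + t^2/2 + 1 - Real.cosh t)
    (F' := fun t => (t^3/6 * Real.cosh t + t - Real.sinh t) + t^4/24 * Real.sinh t) (by simp)
    (fun x => by
      have h1 := (((((hasDerivAt_pow 4 x).div_const 24).mul (Real.hasDerivAt_cosh x)).add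
        ((hasDerivAt_pow 2 x).div_const 2)).add (hasDerivAt_const x 1)).sub
        (Real.hasDerivAt_cosh x)
      refine h1.congr_deriv ?_; simp; ring)
    (fun x hx => add_nonneg (by linarith [lad6 hx.le])
      (mul_nonneg (by positivity) (sinh_nn hx.le))) y hy
  have h' : 0 ≤ y^4/24 * Real.cosh y + y^2/2 + 1 - Real.cosh y := h
  linarith

private lemma lad3 {α y : ℝ} (hα0 : 0 ≤ α) (hα1 : α ≤ 1) (hy : 0 ≤ y) :
    Real.sinh (α * y) ≤ α * Real.sinh y := by
  have h := nonneg_of_deriv (F := fun t => α * Real.sinh t - Real.sinh (α * t))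
    (F' := fun t => α * Real.cosh t - Real.cosh (α * t) * α) (by simp)
    (fun x => by
      have h2 : HasDerivAt (fun t : ℝ => Real.sinh (α * t)) (Real.cosh (α * x) * (α * 1)) x :=
        ((hasDerivAt_id x).const_mul α).sinh
      exact ((Real.hasDerivAt_sinh x).const_mul α).sub (by simpa using h2))
    (fun x hx => by
      have hc : Real.cosh (α * x) ≤ Real.cosh x := by
        rw [Real.cosh_le_cosh, abs_of_nonneg (mul_nonneg hα0 hx.le), abs_of_nonneg hx.le]
        nlinarith
      show (0:ℝ) ≤ α * Real.cosh x - Real.cosh (α * x) * α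
      nlinarith [Real.cosh_pos (α * x)]) y hy
  have h' : 0 ≤ α * Real.sinh y - Real.sinh (α * y) := h
  linarith

private lemma lad4 {α y : ℝ} (hα0 : 0 ≤ α) (hα1 : α ≤ 1) (hy : 0 ≤ y) :
    Real.cosh (α * y) - 1 ≤ α^2 * (Real.cosh y - 1) := by
  have h := nonneg_of_deriv (F := fun t => α^2 * (Real.cosh t - 1) - (Real.cosh (α * t) - 1))
    (F' := fun t => α^2 * Real.sinh t - Real.sinh (α * t) * α) (by simp)
    (fun x => by
      have h2 : HasDerivAt (fun t : ℝ => Real.cosh (α * t) - 1) (Real.sinh (α * x) * (α * 1)) x :=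
        (((hasDerivAt_id x).const_mul α).cosh).sub_const 1
      exact (((Real.hasDerivAt_cosh x).sub_const 1).const_mul (α^2)).sub (by simpa using h2))
    (fun x hx => by
      show (0:ℝ) ≤ α^2 * Real.sinh x - Real.sinh (α * x) * α
      nlinarith [lad3 hα0 hα1 hx.le, sinh_nn (mul_nonneg hα0 hx.le)]) y hy
  have h' : 0 ≤ α^2 * (Real.cosh y - 1) - (Real.cosh (α * y) - 1) := h
  linarith

private lemma expsq {z : ℝ} (hz : 0 ≤ z) : (1 + z/2)^2 ≤ Real.exp z := by
  have h := Real.add_one_le_exp (z/2)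
  have h2 : Real.exp (z/2) * Real.exp (z/2) = Real.exp z := by
    rw [← Real.exp_add]; ring_nf
  nlinarith [Real.exp_pos (z/2)]

private lemma exp_half_ub : Real.exp 0.5 ≤ 1.64873 := by
  have hh : Real.exp 0.5 * Real.exp 0.5 = Real.exp 1 := by rw [← Real.exp_add]; norm_num
  nlinarith [Real.exp_one_lt_d9, Real.exp_pos 0.5]

private lemma exp_15_ub : Real.exp 1.5 ≤ 4.4818 := by
  have hh : Real.exp 1.5 = Real.exp 1 * Real.exp 0.5 := by rw [← Real.exp_add]; norm_num
  nlinarith [Real.exp_one_lt_d9, exp_half_ub, Real.exp_pos 0.5, Real.exp_pos 1]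

private lemma cosh_le_exp {z : ℝ} (hz : 0 ≤ z) : Real.cosh z ≤ Real.exp z := by
  rw [Real.cosh_eq]
  have : Real.exp (-z) ≤ Real.exp z := Real.exp_le_exp.mpr (by linarith)
  linarith

private lemma W_nonneg {x : ℝ} (hx : 0 ≤ x) :
    5.76 * Real.cosh (2.4 * x) ≤ (6 + 24*x^2 + 8*x^4) * Real.exp (x^2) := by
  have hE1 : (1 + x^2/2)^2 ≤ Real.exp (x^2) := expsq (by positivity)
  rcases le_or_gt (x^2) 0.39 with hc | hc
  · have hx625 : x ≤ 0.625 := by nlinarith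
    have hcosh_ub : Real.cosh (2.4*x) ≤ 2.7409 := by
      rw [Real.cosh_eq]
      have e1 : Real.exp (2.4*x) ≤ Real.exp 1.5 := Real.exp_le_exp.mpr (by nlinarith)
      have e2 : Real.exp (-(2.4*x)) ≤ 1 := by
        calc Real.exp (-(2.4*x)) ≤ Real.exp 0 := Real.exp_le_exp.mpr (by nlinarith)
        _ = 1 := Real.exp_zero
      linarith [exp_15_ub]
    have hlad5 := lad5 (y := 2.4*x) (by positivity)
    have hcosh2 : Real.cosh (2.4*x) ≤ 1 + 2.88*x^2 + 3.7894*x^4 := by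
      nlinarith [pow_nonneg hx 4]
    have hmul : (6 + 24*x^2 + 8*x^4) * (1 + x^2/2)^2 ≤ (6 + 24*x^2 + 8*x^4) * Real.exp (x^2) :=
      mul_le_mul_of_nonneg_left hE1 (by positivity)
    nlinarith [sq_nonneg x, pow_nonneg hx 4, sq_nonneg (x^2), pow_nonneg hx 6, pow_nonneg hx 8]
  · have hE' : (1.39 : ℝ) ≤ Real.exp (x^2) := by
      have := Real.add_one_le_exp (x^2); linarith
    have hamgm : Real.exp (2.4*x) ≤ Real.exp 1.44 * Real.exp (x^2) := by
      rw [← Real.exp_add]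
      apply Real.exp_le_exp.mpr; nlinarith [sq_nonneg (x-1.2)]
    have h144 : Real.exp 1.44 ≤ 4.4818 :=
      le_trans (Real.exp_le_exp.mpr (by norm_num)) exp_15_ub
    have hcosh_ub : Real.cosh (2.4*x) ≤ (Real.exp 1.44 * Real.exp (x^2) + 1)/2 := by
      rw [Real.cosh_eq]
      have e2 : Real.exp (-(2.4*x)) ≤ 1 := by
        calc Real.exp (-(2.4*x)) ≤ Real.exp 0 := Real.exp_le_exp.mpr (by nlinarith)
        _ = 1 := Real.exp_zero
      linarith
    have hpos := Real.exp_pos (x^2)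
    nlinarith [pow_nonneg hx 4, mul_le_mul_of_nonneg_right h144 hpos.le,
      mul_nonneg (by linarith : (0:ℝ) ≤ x^2 - 0.39) hpos.le]

private lemma L8 {x : ℝ} (hx : 0 ≤ x) :
    Real.cosh (2.4 * x) ≤ (1 + 2*x^2) * Real.exp (x^2) := by
  have hexpsq : ∀ t : ℝ, HasDerivAt (fun s : ℝ => Real.exp (s^2)) (Real.exp (t^2) * (2*t)) t := by
    intro t
    have := (hasDerivAt_pow 2 t).exp
    simpa using this
  have hH := nonneg_of_deriv
    (F := fun t => (6*t + 4*t^3) * Real.exp (t^2) - 2.4 * Real.sinh (2.4*t))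
    (F' := fun t => ((6 + 24*t^2 + 8*t^4) * Real.exp (t^2) - 5.76 * Real.cosh (2.4*t)))
    (by simp)
    (fun t => by
      have h1 : HasDerivAt (fun s : ℝ => 6*s + 4*s^3) (6 + 12*t^2) t := by
        have := ((hasDerivAt_id t).const_mul 6).add ((hasDerivAt_pow 3 t).const_mul 4)
        refine this.congr_deriv ?_; simp; ring
      have h2 : HasDerivAt (fun s : ℝ => Real.sinh (2.4*s)) (Real.cosh (2.4*t) * (2.4*1)) t :=
        ((hasDerivAt_id t).const_mul 2.4).sinh
      have := (h1.mul (hexpsq t)).sub (h2.const_mul 2.4)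
      refine this.congr_deriv ?_; ring)
    (fun t ht => by
      have := W_nonneg ht.le
      show (0:ℝ) ≤ (6 + 24*t^2 + 8*t^4) * Real.exp (t^2) - 5.76 * Real.cosh (2.4*t)
      linarith)
  have hG := nonneg_of_deriv
    (F := fun t => (1 + 2*t^2) * Real.exp (t^2) - Real.cosh (2.4*t))
    (F' := fun t => (6*t + 4*t^3) * Real.exp (t^2) - 2.4 * Real.sinh (2.4*t))
    (by simp)
    (fun t => by
      have h1 : HasDerivAt (fun s : ℝ => 1 + 2*s^2) (4*t) t := by
        have := (hasDerivAt_const t 1).add ((hasDerivAt_pow 2 t).const_mul 2)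
        refine this.congr_deriv ?_; simp; ring
      have h2 : HasDerivAt (fun s : ℝ => Real.cosh (2.4*s)) (Real.sinh (2.4*t) * (2.4*1)) t :=
        ((hasDerivAt_id t).const_mul 2.4).cosh
      have := (h1.mul (hexpsq t)).sub h2
      refine this.congr_deriv ?_; ring)
    (fun t ht => hH t ht.le)
  have h' : 0 ≤ (1 + 2*x^2) * Real.exp (x^2) - Real.cosh (2.4*x) := hG x hx
  linarith

private lemma L9 {x : ℝ} (hx : 0 ≤ x) :
    Real.sinh (2.4 * x) ≤ 2.4 * x * Real.exp (x^2) := by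
  have hexpsq : ∀ t : ℝ, HasDerivAt (fun s : ℝ => Real.exp (s^2)) (Real.exp (t^2) * (2*t)) t := by
    intro t; have := (hasDerivAt_pow 2 t).exp; simpa using this
  have hG := nonneg_of_deriv
    (F := fun t => 2.4 * t * Real.exp (t^2) - Real.sinh (2.4*t))
    (F' := fun t => 2.4 * ((1 + 2*t^2) * Real.exp (t^2) - Real.cosh (2.4*t)))
    (by simp)
    (fun t => by
      have h1 : HasDerivAt (fun s : ℝ => 2.4*s) (2.4 : ℝ) t := by
        have := (hasDerivAt_id t).const_mul (2.4 : ℝ); simpa using this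
      have h2 : HasDerivAt (fun s : ℝ => Real.sinh (2.4*s)) (Real.cosh (2.4*t) * (2.4*1)) t :=
        ((hasDerivAt_id t).const_mul 2.4).sinh
      have := (h1.mul (hexpsq t)).sub h2
      refine this.congr_deriv ?_; ring)
    (fun t ht => by
      have := L8 ht.le
      show (0:ℝ) ≤ 2.4 * ((1 + 2*t^2) * Real.exp (t^2) - Real.cosh (2.4*t))
      linarith)
  have h' : 0 ≤ 2.4 * x * Real.exp (x^2) - Real.sinh (2.4*x) := hG x hx
  linarith

private lemma L10 {x : ℝ} (hx : 0 ≤ x) :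
    Real.cosh (2.4 * x) - 1 ≤ 2.88 * (Real.exp (x^2) - 1) := by
  have hexpsq : ∀ t : ℝ, HasDerivAt (fun s : ℝ => Real.exp (s^2)) (Real.exp (t^2) * (2*t)) t := by
    intro t; have := (hasDerivAt_pow 2 t).exp; simpa using this
  have hG := nonneg_of_deriv
    (F := fun t => 2.88 * (Real.exp (t^2) - 1) - (Real.cosh (2.4*t) - 1))
    (F' := fun t => 2.4 * (2.4 * t * Real.exp (t^2) - Real.sinh (2.4*t)))
    (by simp)
    (fun t => by
      have h2 : HasDerivAt (fun s : ℝ => Real.cosh (2.4*s) - 1) (Real.sinh (2.4*t) * (2.4*1)) t :=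
        (((hasDerivAt_id t).const_mul 2.4).cosh).sub_const 1
      have := (((hexpsq t).sub_const 1).const_mul 2.88).sub h2
      refine this.congr_deriv ?_; ring)
    (fun t ht => by
      have := L9 ht.le
      show (0:ℝ) ≤ 2.4 * (2.4 * t * Real.exp (t^2) - Real.sinh (2.4*t))
      linarith)
  have h' : 0 ≤ 2.88 * (Real.exp (x^2) - 1) - (Real.cosh (2.4*x) - 1) := hG x hx
  linarith

private lemma P3 {u x : ℝ} (hu0 : 0 ≤ u) (hu : u ≤ 1.2) (hx : 0 ≤ x) :
    Real.cosh (2*u*x) - 1 ≤ 2*u^2 * (Real.exp (x^2) - 1) := by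
  have hα0 : (0:ℝ) ≤ u/1.2 := by positivity
  have hα1 : u/1.2 ≤ 1 := by linarith [(div_le_one (by norm_num : (0:ℝ) < 1.2)).mpr hu]
  have h1 := lad4 (α := u/1.2) (y := 2.4*x) hα0 hα1 (by positivity)
  have heq : (u/1.2) * (2.4*x) = 2*u*x := by ring
  rw [heq] at h1
  have h2 := L10 hx
  have h3 : (0:ℝ) ≤ Real.cosh (2.4*x) - 1 := by linarith [Real.one_le_cosh (2.4*x)]
  calc Real.cosh (2*u*x) - 1 ≤ (u/1.2)^2 * (Real.cosh (2.4*x) - 1) := h1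
    _ ≤ (u/1.2)^2 * (2.88 * (Real.exp (x^2) - 1)) := by
        apply mul_le_mul_of_nonneg_left h2 (by positivity)
    _ = 2*u^2 * (Real.exp (x^2) - 1) := by ring

private lemma N2 {u : ℝ} (hu : 1.2 ≤ u) : 2*u^2*Real.exp u ≤ 2.5*Real.exp (u^2) := by
  have hv : (0:ℝ) ≤ u^2 - u := by nlinarith
  have h1 : (1 + (u^2-u)/2)^2 ≤ Real.exp (u^2-u) := expsq hv
  have h2 : Real.exp (u^2) = Real.exp u * Real.exp (u^2 - u) := by
    rw [← Real.exp_add]; ring_nf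
  have key : 2*u^2 ≤ 2.5*(1 + (u^2-u)/2)^2 := by
    nlinarith [sq_nonneg (u - 1.35), sq_nonneg (u^2 - 1.8225), sq_nonneg ((u-1.35)*(u-1.2)),
      mul_nonneg (by linarith : (0:ℝ) ≤ u - 1.2) (sq_nonneg (u - 1.35))]
  calc 2*u^2*Real.exp u ≤ (2.5*(1 + (u^2-u)/2)^2) * Real.exp u :=
        mul_le_mul_of_nonneg_right key (Real.exp_pos u).le
    _ ≤ (2.5*Real.exp (u^2-u)) * Real.exp u := by
        apply mul_le_mul_of_nonneg_right _ (Real.exp_pos u).le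
        linarith
    _ = 2.5*Real.exp (u^2) := by rw [h2]; ring

private lemma P4 {u x : ℝ} (hu : 1.2 ≤ u) (hx : 0 ≤ x) :
    Real.cosh (2*u*x) - 1 ≤ 2.5 * Real.exp (u^2) * (Real.exp (x^2) - 1) := by
  have hu0 : (0:ℝ) ≤ u := by linarith
  rcases le_or_gt x 0.5 with hxs | hxl
  · have h1 := lad2 (y := 2*u*x) (by positivity)
    have h2 : Real.cosh (2*u*x) ≤ Real.exp u := by
      calc Real.cosh (2*u*x) ≤ Real.exp (2*u*x) := cosh_le_exp (by positivity)
        _ ≤ Real.exp u := Real.exp_le_exp.mpr (by nlinarith)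
    have h3 : x^2 ≤ Real.exp (x^2) - 1 := by linarith [Real.add_one_le_exp (x^2)]
    have hN2 := N2 hu
    have hcoshpos := Real.one_le_cosh (2*u*x)
    have h4 : Real.cosh (2*u*x) - 1 ≤ 2*u^2*x^2 * Real.exp u := by
      have : (2*u*x)^2/2 * Real.cosh (2*u*x) ≤ (2*u*x)^2/2 * Real.exp u := by
        apply mul_le_mul_of_nonneg_left h2 (by positivity)
      calc Real.cosh (2*u*x) - 1 ≤ (2*u*x)^2/2 * Real.cosh (2*u*x) := h1
        _ ≤ (2*u*x)^2/2 * Real.exp u := this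
        _ = 2*u^2*x^2 * Real.exp u := by ring
    calc Real.cosh (2*u*x) - 1 ≤ 2*u^2*x^2 * Real.exp u := h4
      _ = (2*u^2*Real.exp u) * x^2 := by ring
      _ ≤ (2.5*Real.exp (u^2)) * x^2 := mul_le_mul_of_nonneg_right hN2 (by positivity)
      _ ≤ (2.5*Real.exp (u^2)) * (Real.exp (x^2) - 1) := by
          apply mul_le_mul_of_nonneg_left h3 (by positivity)
      _ = 2.5 * Real.exp (u^2) * (Real.exp (x^2) - 1) := by ring
  · have h1 : Real.cosh (2*u*x) ≤ Real.exp (u^2) * Real.exp (x^2) / 2 + 1/2 := by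
      rw [Real.cosh_eq]
      have e1 : Real.exp (2*u*x) ≤ Real.exp (u^2) * Real.exp (x^2) := by
        rw [← Real.exp_add]; apply Real.exp_le_exp.mpr; nlinarith [sq_nonneg (u - x)]
      have e2 : Real.exp (-(2*u*x)) ≤ 1 := by
        calc Real.exp (-(2*u*x)) ≤ Real.exp 0 := Real.exp_le_exp.mpr (by nlinarith)
        _ = 1 := Real.exp_zero
      linarith
    have h2 : (1.25:ℝ) ≤ Real.exp (x^2) := by
      have := Real.add_one_le_exp (x^2); nlinarith
    -- exp(x²)/2 + ... ; need E/2 - 1/2·? goal: E_u*E_x/2 - 1/2 ≤ 2.5 E_u (E_x - 1)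
    have hEu := Real.exp_pos (u^2)
    have hEu1 : (1:ℝ) ≤ Real.exp (u^2) := by
      rw [show (1:ℝ) = Real.exp 0 by simp]; apply Real.exp_le_exp.mpr; positivity
    -- 2.5 E_u E_x - 2.5 E_u - E_u E_x/2 + 1/2 - 1 ≥ 0 ⟸ E_u(2 E_x - 2.5) ≥ 1/2 ⟸ E_x ≥ 1.25: 2E_x - 2.5 ≥ 0... need more
    -- ⟺ 2.5E_uE_x - 2.5E_u - 0.5E_uE_x + 0.5 ≥ 0 ⟺ 2E_uE_x - 2.5E_u + 0.5 ≥ 0 ⟺ E_u(2E_x - 2.5) + 0.5 ≥ 0 ✓ since E_x ≥ 1.25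
    nlinarith [mul_le_mul_of_nonneg_left h2 hEu.le]

private lemma C2 {u δ M : ℝ} (hu : 1.2 ≤ u) (hδ : 0 ≤ δ) (hM1 : 1 ≤ M)
    (hMb : 0.7667*(1+δ)^2 ≤ M) :
    1 + 2.5*Real.exp (u^2)*δ ≤ Real.exp (M*u^2) := by
  have hu2 : (1.44:ℝ) ≤ u^2 := by nlinarith
  have hE : (3.75:ℝ) ≤ Real.exp (u^2) := by
    have h18 : (1.18:ℝ) ≤ Real.exp 0.18 := by linarith [Real.add_one_le_exp 0.18]
    have h8 : ((1.18:ℝ))^8 ≤ (Real.exp 0.18)^8 := pow_le_pow_left₀ (by norm_num) h18 8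
    have heq : Real.exp 1.44 = (Real.exp 0.18)^8 := by
      rw [show (1.44:ℝ) = (8:ℕ)*0.18 by norm_num, Real.exp_nat_mul]
    have : (3.75:ℝ) ≤ Real.exp 1.44 := by rw [heq]; nlinarith
    linarith [Real.exp_le_exp.mpr hu2]
  have hEpos := Real.exp_pos (u^2)
  have c3 : (0.64:ℝ) ≤ 1 + 1.44*(M-1) - 2.5*δ := by
    nlinarith [sq_nonneg (δ - 0.1323)]
  have c4 : 0.64 * Real.exp (u^2) ≤ (1 + 1.44*(M-1) - 2.5*δ) * Real.exp (u^2) :=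
    mul_le_mul_of_nonneg_right c3 hEpos.le
  have step1 : 1 + 2.5*Real.exp (u^2)*δ ≤ Real.exp (u^2) * (1 + 1.44*(M-1)) := by
    nlinarith
  have step2 : Real.exp (u^2) * (1 + 1.44*(M-1)) ≤ Real.exp (u^2) * (1 + (M-1)*u^2) := by
    apply mul_le_mul_of_nonneg_left _ hEpos.le
    nlinarith
  have step3 : Real.exp (u^2) * (1 + (M-1)*u^2) ≤ Real.exp (u^2) * Real.exp ((M-1)*u^2) := by
    apply mul_le_mul_of_nonneg_left _ hEpos.le
    linarith [Real.add_one_le_exp ((M-1)*u^2)]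
  have hsplit : Real.exp (u^2) * Real.exp ((M-1)*u^2) = Real.exp (M*u^2) := by
    rw [← Real.exp_add]; ring_nf
  linarith [step1.trans (step2.trans step3), hsplit.le, hsplit.ge]

private lemma key_final {u δ M : ℝ} (hu : 0 ≤ u) (hδ : 0 ≤ δ) (hM1 : 1 ≤ M)
    (hMb : 0.7667*(1+δ)^2 ≤ M) :
    1 + (if u ≤ 1.2 then 2*u^2 else 2.5*Real.exp (u^2)) * δ ≤ Real.exp (M*u^2) := by
  split_ifs with h
  · have hN1 : 2*δ ≤ M := by nlinarith [sq_nonneg (δ - 0.3043)]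
    have : 2*u^2*δ ≤ M*u^2 := by nlinarith [sq_nonneg u]
    linarith [Real.add_one_le_exp (M*u^2)]
  · have := C2 (le_of_not_ge h) hδ hM1 hMb
    linarith

private lemma key_pointwise {u x : ℝ} (hu : 0 ≤ u) (hx : 0 ≤ x) :
    Real.cosh (2*u*x) - 1 ≤
      (if u ≤ 1.2 then 2*u^2 else 2.5*Real.exp (u^2)) * (Real.exp (x^2) - 1) := by
  split_ifs with h
  · exact P3 hu h hx
  · have h4 := P4 (le_of_not_ge h) hx
    linarith

private lemma const_fact : (0.7667 : ℝ) ≤ Real.exp 1 / (2 * Real.sqrt Real.pi) := by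
  have h2 : (0:ℝ) < Real.sqrt Real.pi := Real.sqrt_pos.mpr Real.pi_pos
  have h1 : Real.sqrt Real.pi ≤ 1.7725 := by
    rw [show (1.7725:ℝ) = Real.sqrt (1.7725^2) from (Real.sqrt_sq (by norm_num)).symm]
    apply Real.sqrt_le_sqrt
    nlinarith [Real.pi_lt_d6]
  rw [le_div_iff₀ (by positivity)]
  nlinarith [Real.exp_one_gt_d9]

set_option maxHeartbeats 1000000 in
/-- If a probability measure on a separable metric space has a Gaussian moment
`∫ exp(a·d(x₀,x)²) dμ ≤ b` (`a > 0`, `b ≥ 1`), then it satisfies the Gaussian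
concentration bound with constant `D = (1/(2a))·max(1, b²e/(2√π))`. -/
theorem gaussian_moment_implies_gcb {Ω : Type*} [MetricSpace Ω]
    [TopologicalSpace.SeparableSpace Ω] [MeasurableSpace Ω] [BorelSpace Ω]
    (μ : Measure Ω) [IsProbabilityMeasure μ] (x₀ : Ω) (a b : ℝ)
    (ha : 0 < a) (hb : 1 ≤ b)
    (hmom : ∫⁻ x, ENNReal.ofReal (Real.exp (a * dist x₀ x ^ 2)) ∂μ ≤ ENNReal.ofReal b) :
    ∀ (L : NNReal) (f : Ω → ℝ), LipschitzWith L f →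
      ∫ x, Real.exp (f x - ∫ y, f y ∂μ) ∂μ ≤
        Real.exp ((1 / (2 * a)) * max 1 (b ^ 2 * Real.exp 1 / (2 * Real.sqrt Real.pi))
          * (L : ℝ) ^ 2) := by
  intro L f hf
  set ℓ : ℝ := (L : ℝ) with hℓdef
  have hℓ0 : (0:ℝ) ≤ ℓ := L.coe_nonneg
  set sa : ℝ := Real.sqrt a with hsadef
  have hsa0 : 0 < sa := Real.sqrt_pos.mpr ha
  have hsa2 : sa^2 = a := Real.sq_sqrt ha.le
  set u : ℝ := ℓ / (2*sa) with hudef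
  have hu0 : 0 ≤ u := by positivity
  have hu2 : u^2 = ℓ^2/(4*a) := by
    rw [hudef, div_pow, mul_pow, hsa2]; norm_num
  set M : ℝ := max 1 (b^2*Real.exp 1/(2*Real.sqrt Real.pi)) with hMdef
  have hM1 : 1 ≤ M := le_max_left _ _
  have hMb : 0.7667*(1+(b-1))^2 ≤ M := by
    have h1 : b^2 * (Real.exp 1/(2*Real.sqrt Real.pi)) ≤ M := by
      rw [hMdef, ← mul_div_assoc]
      exact le_max_right _ _
    have h2 : 0.7667*b^2 ≤ b^2 * (Real.exp 1/(2*Real.sqrt Real.pi)) := by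
      have := const_fact
      nlinarith [sq_nonneg b]
    have h3 : (1+(b-1))^2 = b^2 := by ring
    rw [h3]; linarith
  -- distance function and Gaussian weight
  set S : Ω → ℝ := fun y => dist x₀ y with hSdef
  have hScont : Continuous S := continuous_const.dist continuous_id
  have hS0 : ∀ y, 0 ≤ S y := fun y => dist_nonneg
  set E : Ω → ℝ := fun y => Real.exp (a * S y^2) with hEdef
  have hEy : ∀ y, E y = Real.exp (a * S y^2) := fun y => rfl
  have hEcont : Continuous E := Real.continuous_exp.comp (continuous_const.mul (hScont.pow 2))
  have hE1 : ∀ y, (1:ℝ) ≤ E y := by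
    intro y
    rw [hEy y]
    calc (1:ℝ) = Real.exp 0 := Real.exp_zero.symm
    _ ≤ Real.exp (a * S y^2) := Real.exp_le_exp.mpr (by positivity)
  have hEmeas : AEStronglyMeasurable E μ := hEcont.aestronglyMeasurable
  have hEint : Integrable E μ := by
    refine ⟨hEmeas, ?_⟩
    rw [MeasureTheory.hasFiniteIntegral_iff_ofReal
      (Filter.Eventually.of_forall (fun y => (Real.exp_pos _).le))]
    exact lt_of_le_of_lt hmom ENNReal.ofReal_lt_top
  have hEint_le : ∫ y, E y ∂μ ≤ b := by
    rw [MeasureTheory.integral_eq_lintegral_of_nonneg_ae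
      (Filter.Eventually.of_forall (fun y => (Real.exp_pos _).le)) hEmeas]
    calc (∫⁻ y, ENNReal.ofReal (E y) ∂μ).toReal
        ≤ (ENNReal.ofReal b).toReal := ENNReal.toReal_mono ENNReal.ofReal_ne_top hmom
      _ = b := ENNReal.toReal_ofReal (by linarith)
  -- centered function g
  set g : Ω → ℝ := fun y => f y - f x₀ with hgdef
  have hgy : ∀ y, g y = f y - f x₀ := fun y => rfl
  have hgcont : Continuous g := hf.continuous.sub continuous_const
  have hgabs : ∀ y, |g y| ≤ ℓ * S y := by
    intro y
    have h1 := hf.dist_le_mul y x₀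
    calc |g y| = dist (f y) (f x₀) := (Real.dist_eq _ _).symm
      _ ≤ ℓ * dist y x₀ := h1
      _ = ℓ * S y := by rw [hSdef]; simp [dist_comm]
  -- AM-GM comparison for integrability
  set K : ℝ := Real.exp (ℓ^2/(4*a)) with hKdef
  have hamgm : ∀ y, ℓ * S y ≤ a * S y^2 + ℓ^2/(4*a) := by
    intro y
    have hid : a * S y^2 + ℓ^2/(4*a) - ℓ * S y = (2*a*S y - ℓ)^2/(4*a) := by
      field_simp
      ring
    have hnn : (0:ℝ) ≤ (2*a*S y - ℓ)^2/(4*a) :=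
      div_nonneg (sq_nonneg _) (by linarith)
    linarith
  have hexple : ∀ y, Real.exp (ℓ * S y) ≤ K * E y := by
    intro y
    rw [hKdef, hEy y, ← Real.exp_add]
    apply Real.exp_le_exp.mpr
    linarith [hamgm y]
  -- integrability facts
  have hcoshS_cont : Continuous (fun y => Real.cosh (ℓ * S y)) :=
    Real.continuous_cosh.comp (continuous_const.mul hScont)
  have hcoshS_le : ∀ y, Real.cosh (ℓ * S y) ≤ K * E y := fun y =>
    le_trans (cosh_le_exp (by positivity)) (hexple y)
  have hcoshS_int : Integrable (fun y => Real.cosh (ℓ * S y)) μ := by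
    refine Integrable.mono' (hEint.const_mul K) hcoshS_cont.aestronglyMeasurable ?_
    apply Filter.Eventually.of_forall
    intro y
    rw [Real.norm_eq_abs, abs_of_nonneg (by positivity : (0:ℝ) ≤ Real.cosh (ℓ * S y))]
    exact hcoshS_le y
  have hexpg_cont : Continuous (fun y => Real.exp (g y)) := Real.continuous_exp.comp hgcont
  have hexpng_cont : Continuous (fun y => Real.exp (-g y)) :=
    Real.continuous_exp.comp hgcont.neg
  have hexpg_int : Integrable (fun y => Real.exp (g y)) μ := by
    refine Integrable.mono' (hEint.const_mul K) hexpg_cont.aestronglyMeasurable ?_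
    apply Filter.Eventually.of_forall
    intro y
    rw [Real.norm_eq_abs, abs_of_nonneg (Real.exp_pos _).le]
    calc Real.exp (g y) ≤ Real.exp (ℓ * S y) :=
        Real.exp_le_exp.mpr (le_trans (le_abs_self _) (hgabs y))
      _ ≤ K * E y := hexple y
  have hexpng_int : Integrable (fun y => Real.exp (-g y)) μ := by
    refine Integrable.mono' (hEint.const_mul K) hexpng_cont.aestronglyMeasurable ?_
    apply Filter.Eventually.of_forall
    intro y
    rw [Real.norm_eq_abs, abs_of_nonneg (Real.exp_pos _).le]
    calc Real.exp (-g y) ≤ Real.exp (ℓ * S y) :=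
        Real.exp_le_exp.mpr (le_trans (neg_le_abs _) (hgabs y))
      _ ≤ K * E y := hexple y
  have hg_int : Integrable g μ := by
    refine Integrable.mono' (hEint.const_mul (ℓ/sa)) hgcont.aestronglyMeasurable ?_
    apply Filter.Eventually.of_forall
    intro y
    rw [Real.norm_eq_abs]
    have h1 : sa * S y ≤ E y := by
      have h2 : sa * S y ≤ 1 + (sa * S y)^2 := by nlinarith [sq_nonneg (sa * S y - 1)]
      have h3 : 1 + (sa * S y)^2 ≤ Real.exp ((sa*S y)^2) := by
        linarith [Real.add_one_le_exp ((sa*S y)^2)]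
      have h4 : (sa*S y)^2 = a * S y^2 := by rw [mul_pow, hsa2]
      rw [hEy y, ← h4]
      linarith
    calc |g y| ≤ ℓ * S y := hgabs y
      _ ≤ (ℓ/sa) * E y := by
        rw [div_mul_eq_mul_div, le_div_iff₀ hsa0]
        calc ℓ * S y * sa = ℓ * (sa * S y) := by ring
          _ ≤ ℓ * E y := mul_le_mul_of_nonneg_left h1 hℓ0
  have hf_eq : f = fun y => g y + f x₀ := by funext y; rw [hgy y]; ring
  have hf_int : Integrable f μ := by
    rw [hf_eq]
    exact hg_int.add (integrable_const _)
  -- the mean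
  set c : ℝ := ∫ y, g y ∂μ with hcdef
  have hmean : ∫ y, f y ∂μ = c + f x₀ := by
    conv_lhs => rw [hf_eq]
    rw [integral_add hg_int (integrable_const _), integral_const]
    simp [hcdef]
  -- Jensen-type bound : exp(-c) ≤ ∫ exp(-g)
  have hsub_int : Integrable (fun y => c - g y) μ := (integrable_const c).sub hg_int
  have hone_sub_int : Integrable (fun y => 1 + (c - g y)) μ :=
    (integrable_const 1).add hsub_int
  have hJensen : Real.exp (-c) ≤ ∫ y, Real.exp (-g y) ∂μ := by
    have hpt : ∀ y, Real.exp (-c) * (1 + (c - g y)) ≤ Real.exp (-g y) := by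
      intro y
      have h1 : 1 + (c - g y) ≤ Real.exp (c - g y) := by
        linarith [Real.add_one_le_exp (c - g y)]
      calc Real.exp (-c) * (1 + (c - g y)) ≤ Real.exp (-c) * Real.exp (c - g y) :=
          mul_le_mul_of_nonneg_left h1 (Real.exp_pos _).le
        _ = Real.exp (-g y) := by rw [← Real.exp_add]; ring_nf
    have hlhs_int : Integrable (fun y => Real.exp (-c) * (1 + (c - g y))) μ :=
      hone_sub_int.const_mul _
    have hmono := integral_mono hlhs_int hexpng_int hpt
    have hcompute : ∫ y, Real.exp (-c) * (1 + (c - g y)) ∂μ = Real.exp (-c) := by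
      rw [integral_const_mul, integral_add (integrable_const 1) hsub_int,
        integral_sub (integrable_const c) hg_int, integral_const, integral_const]
      simp [hcdef]
    rw [hcompute] at hmono
    exact hmono
  -- key rewrite of the target integral
  set P : ℝ := ∫ y, Real.exp (g y) ∂μ with hPdef
  set Q : ℝ := ∫ y, Real.exp (-g y) ∂μ with hQdef
  have hP0 : 0 ≤ P := integral_nonneg (fun y => (Real.exp_pos _).le)
  have hQ0 : 0 ≤ Q := integral_nonneg (fun y => (Real.exp_pos _).le)
  have hIeq : ∫ x, Real.exp (f x - ∫ y, f y ∂μ) ∂μ = Real.exp (-c) * P := by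
    have h1 : (fun x => Real.exp (f x - ∫ y, f y ∂μ))
        = fun x => Real.exp (-c) * Real.exp (g x) := by
      funext x
      rw [hmean, ← Real.exp_add, hgy x]
      ring_nf
    rw [h1, integral_const_mul]
  -- cosh-integral bound
  set A : ℝ := ∫ y, Real.cosh (ℓ * S y) ∂μ with hAdef
  set Φ : ℝ := if u ≤ 1.2 then 2*u^2 else 2.5*Real.exp (u^2) with hΦdef
  have hΦ0 : 0 ≤ Φ := by
    rw [hΦdef]; split_ifs
    · positivity
    · positivity
  have hptwise : ∀ y, Real.cosh (ℓ * S y) - 1 ≤ Φ * (E y - 1) := by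
    intro y
    have hx : 0 ≤ sa * S y := by positivity
    have h := key_pointwise hu0 hx
    have h1 : 2*u*(sa * S y) = ℓ * S y := by
      rw [hudef]; field_simp
    have h2 : (sa * S y)^2 = a * S y^2 := by rw [mul_pow, hsa2]
    rw [h1, h2, ← hEy y, ← hΦdef] at h
    exact h
  have hcoshg_int : Integrable (fun y => Real.cosh (g y)) μ := by
    refine Integrable.mono' hcoshS_int
      (Real.continuous_cosh.comp hgcont).aestronglyMeasurable ?_
    apply Filter.Eventually.of_forall
    intro y
    rw [Real.norm_eq_abs, abs_of_nonneg (by positivity : (0:ℝ) ≤ Real.cosh (g y)),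
      Real.cosh_le_cosh, abs_of_nonneg (by positivity : (0:ℝ) ≤ ℓ * S y)]
    exact hgabs y
  have hcoshg_le : ∫ y, Real.cosh (g y) ∂μ ≤ A := by
    apply integral_mono hcoshg_int hcoshS_int
    intro y
    show Real.cosh (g y) ≤ Real.cosh (ℓ * S y)
    rw [Real.cosh_le_cosh, abs_of_nonneg (by positivity : (0:ℝ) ≤ ℓ * S y)]
    exact hgabs y
  have hPQ : (P + Q)/2 = ∫ y, Real.cosh (g y) ∂μ := by
    have h1 : (fun y => Real.cosh (g y)) = fun y => (Real.exp (g y) + Real.exp (-g y))/2 := by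
      funext y; rw [Real.cosh_eq]
    rw [h1, integral_div, integral_add hexpg_int hexpng_int]
  have hA_ub : A ≤ 1 + Φ * (b - 1) := by
    have hEsub_int : Integrable (fun y => E y - 1) μ := hEint.sub (integrable_const 1)
    have hcomp_int : Integrable (fun y => 1 + Φ * (E y - 1)) μ :=
      (integrable_const 1).add (hEsub_int.const_mul Φ)
    have h1 : A ≤ ∫ y, (1 + Φ * (E y - 1)) ∂μ := by
      apply integral_mono hcoshS_int hcomp_int
      intro y
      show Real.cosh (ℓ * S y) ≤ 1 + Φ * (E y - 1)
      linarith [hptwise y]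
    have h2 : ∫ y, (1 + Φ * (E y - 1)) ∂μ = 1 + Φ * ((∫ y, E y ∂μ) - 1) := by
      rw [integral_add (integrable_const 1) (hEsub_int.const_mul Φ), integral_const,
        integral_const_mul, integral_sub hEint (integrable_const 1), integral_const]
      simp
    rw [h2] at h1
    have h3 : Φ * ((∫ y, E y ∂μ) - 1) ≤ Φ * (b - 1) :=
      mul_le_mul_of_nonneg_left (by linarith [hEint_le]) hΦ0
    linarith
  have hA_final : A ≤ Real.exp (M * u^2) := by
    have hkf := key_final hu0 (by linarith : (0:ℝ) ≤ b - 1) hM1 hMb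
    rw [← hΦdef] at hkf
    linarith [hA_ub]
  -- assemble
  have hcoshgA : (P + Q)/2 ≤ Real.exp (M * u^2) := by
    rw [hPQ]; exact le_trans hcoshg_le hA_final
  have hPQle : P * Q ≤ Real.exp (M * u^2) ^ 2 := by
    nlinarith [sq_nonneg (P - Q), (Real.exp_pos (M*u^2)).le]
  have hmain : ∫ x, Real.exp (f x - ∫ y, f y ∂μ) ∂μ ≤ Real.exp (M * u^2)^2 := by
    rw [hIeq]
    calc Real.exp (-c) * P ≤ Q * P := mul_le_mul_of_nonneg_right hJensen hP0
      _ = P * Q := by ring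
      _ ≤ Real.exp (M * u^2)^2 := hPQle
  have hexp_eq : Real.exp (M * u^2)^2 = Real.exp (1/(2*a) * M * ℓ^2) := by
    rw [← Real.exp_nat_mul]
    congr 1
    push_cast
    rw [hu2]
    field_simp
    ring
  rw [hexp_eq] at hmain
  exact hmain
end

section
/- Let μ be a probability measure on a separable Banach space Ω. If μ satisfies the Gaussian concentration bound with constant D for all bounded Lipschitz functions, then μ satisfies it with the same constant D for all Lipschitz functions f : Ω → ℝ (in particular e^{±f} are μ-integrable and ∫ e^{f-μ(f)} dμ ≤ e^{D·Lip(f)²}). -/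
open MeasureTheory Real Filter

lemma gcb_exp_integrable_aux {Ω : Type*} [NormedAddCommGroup Ω] [MeasurableSpace Ω]
    [BorelSpace Ω]
    (μ : Measure Ω) [IsProbabilityMeasure μ] (D : ℝ)
    (hGCB : ∀ (L : NNReal) (f : Ω → ℝ), LipschitzWith L f → (∃ C, ∀ x, |f x| ≤ C) →
      ∫ x, Real.exp (f x - ∫ y, f y ∂μ) ∂μ ≤ Real.exp (D * (L : ℝ) ^ 2))
    (L : NNReal) (f : Ω → ℝ) (hf : LipschitzWith L f) :
    Integrable (fun x => Real.exp (f x)) μ := by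
  set E := Real.exp (D * (L : ℝ) ^ 2) with hEdef
  have hE : 0 < E := Real.exp_pos _
  set g : ℕ → Ω → ℝ := fun n x => max (-(n : ℝ)) (min (f x) n) with hgdef
  have hgL : ∀ n, LipschitzWith L (g n) := fun n => (hf.min_const _).const_max _
  have hgb : ∀ n x, |g n x| ≤ (n : ℝ) := by
    intro n x
    rw [abs_le]
    refine ⟨le_max_left _ _, max_le (by simp [neg_le_self (Nat.cast_nonneg n : (0:ℝ) ≤ n)]) (min_le_right _ _)⟩
  have hgf : ∀ n x, |g n x| ≤ |f x| := by
    intro n x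
    rw [abs_le]
    constructor
    · rcases le_total (|f x|) (n : ℝ) with h | h
      · have h1 : f x ≤ (n : ℝ) := (le_abs_self _).trans h
        have h2 : -|f x| ≤ f x := neg_abs_le _
        calc -|f x| ≤ min (f x) n := le_min h2 (h2.trans h1)
          _ ≤ _ := le_max_right _ _
      · exact le_trans (neg_le_neg h) (le_max_left _ _)
    · refine max_le ((neg_nonpos.2 (Nat.cast_nonneg n)).trans (abs_nonneg _)) ((min_le_left _ _).trans (le_abs_self _))
  have hgcont : ∀ n, Continuous (g n) := fun n => (hgL n).continuous
  have hgint : ∀ n, Integrable (g n) μ := by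
    intro n
    refine (integrable_const (n : ℝ)).mono' (hgcont n).aestronglyMeasurable ?_
    exact ae_of_all _ fun x => by rw [Real.norm_eq_abs]; exact hgb n x
  set I : ℕ → ℝ := fun n => ∫ x, g n x ∂μ with hIdef
  have hGCB1 : ∀ n, ∫ x, Real.exp (g n x - I n) ∂μ ≤ E :=
    fun n => hGCB L (g n) (hgL n) ⟨n, hgb n⟩
  have hGCB2 : ∀ n, ∫ x, Real.exp (-(g n x) + I n) ∂μ ≤ E := by
    intro n
    have hneg : LipschitzWith L (fun x => -(g n x)) := LipschitzWith.neg (hgL n)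
    have h := hGCB L _ hneg ⟨n, fun x => by rw [abs_neg]; exact hgb n x⟩
    rw [integral_neg] at h
    simpa [sub_neg_eq_add] using h
  have hexpint2 : ∀ n, Integrable (fun x => Real.exp (-(g n x) + I n)) μ := by
    intro n
    refine (integrable_const (Real.exp ((n : ℝ) + |I n|))).mono'
      (((hgcont n).neg.add continuous_const).rexp.aestronglyMeasurable) ?_
    refine ae_of_all _ fun x => ?_
    rw [Real.norm_eq_abs, abs_of_pos (Real.exp_pos _)]
    refine Real.exp_le_exp.2 ?_
    have := hgb n x
    have := abs_le.1 (hgb n x)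
    have := le_abs_self (I n)
    linarith [this]
  -- choose R with positive measure
  have hexR : ∃ R : ℕ, μ {x | |f x| ≤ (R : ℝ)} ≠ 0 := by
    by_contra h
    push_neg at h
    have hU : (⋃ n : ℕ, {x | |f x| ≤ (n : ℝ)}) = Set.univ := by
      ext x
      simp only [Set.mem_iUnion, Set.mem_setOf_eq, Set.mem_univ, iff_true]
      exact exists_nat_ge _
    have : μ Set.univ = 0 := by
      rw [← hU]
      exact measure_iUnion_null h
    simp at this
  obtain ⟨R, hR⟩ := hexR
  set A := {x | |f x| ≤ (R : ℝ)} with hAdef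
  have hAm : MeasurableSet A :=
    measurableSet_le hf.continuous.abs.measurable measurable_const
  set a := (μ A).toReal with hadef
  have ha : 0 < a := ENNReal.toReal_pos hR (measure_ne_top μ A)
  have key : ∀ n, a * Real.exp (I n - R) ≤ E := by
    intro n
    have hc1 : ∫ x in A, Real.exp (I n - R) ∂μ = a * Real.exp (I n - R) := by
      rw [setIntegral_const, smul_eq_mul]; rfl
    calc a * Real.exp (I n - R) = ∫ x in A, Real.exp (I n - R) ∂μ := hc1.symm
      _ ≤ ∫ x in A, Real.exp (-(g n x) + I n) ∂μ := by
          refine setIntegral_mono_on (integrableOn_const (measure_ne_top μ A))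
            ((hexpint2 n).integrableOn) hAm fun x hx => ?_
          refine Real.exp_le_exp.2 ?_
          have h1 : |g n x| ≤ (R : ℝ) := (hgf n x).trans hx
          have := abs_le.1 h1
          linarith [this.2]
      _ ≤ ∫ x, Real.exp (-(g n x) + I n) ∂μ :=
          setIntegral_le_integral (hexpint2 n) (ae_of_all _ fun x => (Real.exp_pos _).le)
      _ ≤ E := hGCB2 n
  have hIK : ∀ n, I n ≤ (R : ℝ) + Real.log (E / a) := by
    intro n
    have h1 : Real.exp (I n - R) ≤ E / a := by
      rw [le_div_iff₀ ha]
      linarith [key n, mul_comm a (Real.exp (I n - R))]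
    have h2 : I n - R ≤ Real.log (E / a) :=
      (Real.le_log_iff_exp_le (div_pos hE ha)).2 h1
    linarith
  set K := (R : ℝ) + Real.log (E / a) with hKdef
  have hexpgint : ∀ n, Integrable (fun x => Real.exp (g n x)) μ := by
    intro n
    refine (integrable_const (Real.exp (n : ℝ))).mono'
      ((hgcont n).rexp.aestronglyMeasurable) ?_
    refine ae_of_all _ fun x => ?_
    rw [Real.norm_eq_abs, abs_of_pos (Real.exp_pos _)]
    exact Real.exp_le_exp.2 ((le_abs_self _).trans (hgb n x))
  have hB : ∀ n, ∫ x, Real.exp (g n x) ∂μ ≤ Real.exp K * E := by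
    intro n
    have heq : (fun x => Real.exp (g n x)) = fun x => Real.exp (g n x - I n) * Real.exp (I n) := by
      funext x
      rw [← Real.exp_add]
      ring_nf
    rw [heq, integral_mul_const]
    have h1 := hGCB1 n
    have h2 : Real.exp (I n) ≤ Real.exp K := Real.exp_le_exp.2 (hIK n)
    have h3 : (0:ℝ) ≤ ∫ x, Real.exp (g n x - I n) ∂μ :=
      integral_nonneg fun x => (Real.exp_pos _).le
    calc (∫ x, Real.exp (g n x - I n) ∂μ) * Real.exp (I n)
        ≤ E * Real.exp K := mul_le_mul h1 h2 (Real.exp_pos _).le hE.le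
      _ = Real.exp K * E := mul_comm _ _
  have hconv : ∀ x, ∀ᶠ n in atTop, g n x = f x := by
    intro x
    filter_upwards [eventually_ge_atTop ⌈|f x|⌉₊] with n hn
    have hn' : |f x| ≤ (n : ℝ) := (Nat.le_ceil _).trans (Nat.cast_le.2 hn)
    have h1 : f x ≤ (n : ℝ) := (le_abs_self _).trans hn'
    have h2 : -(n : ℝ) ≤ f x := by
      have := neg_abs_le (f x); linarith
    simp only [hgdef]
    rw [min_eq_left h1, max_eq_right h2]
  have hlin : ∫⁻ x, ENNReal.ofReal (Real.exp (f x)) ∂μ ≤ ENNReal.ofReal (Real.exp K * E) := by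
    have hmeas : ∀ n, Measurable fun x => ENNReal.ofReal (Real.exp (g n x)) :=
      fun n => ENNReal.measurable_ofReal.comp ((hgcont n).rexp.measurable)
    have heq : ∀ x, liminf (fun n => ENNReal.ofReal (Real.exp (g n x))) atTop
        = ENNReal.ofReal (Real.exp (f x)) := by
      intro x
      refine Filter.Tendsto.liminf_eq ?_
      refine tendsto_const_nhds.congr' ?_
      filter_upwards [hconv x] with n hn
      rw [hn]
    calc ∫⁻ x, ENNReal.ofReal (Real.exp (f x)) ∂μ
        = ∫⁻ x, liminf (fun n => ENNReal.ofReal (Real.exp (g n x))) atTop ∂μ :=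
          lintegral_congr fun x => (heq x).symm
      _ ≤ liminf (fun n => ∫⁻ x, ENNReal.ofReal (Real.exp (g n x)) ∂μ) atTop :=
          lintegral_liminf_le hmeas
      _ ≤ ENNReal.ofReal (Real.exp K * E) := by
          refine liminf_le_of_frequently_le' (Frequently.of_forall fun n => ?_)
          rw [← ofReal_integral_eq_lintegral_ofReal (hexpgint n)
            (ae_of_all _ fun x => (Real.exp_pos _).le)]
          exact ENNReal.ofReal_le_ofReal (hB n)
  refine ⟨(Real.continuous_exp.comp hf.continuous).aestronglyMeasurable, ?_⟩
  rw [hasFiniteIntegral_iff_ofReal (ae_of_all _ fun x => (Real.exp_pos _).le)]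
  exact lt_of_le_of_lt hlin ENNReal.ofReal_lt_top
/-- On a separable Banach space, if `μ` satisfies the Gaussian concentration bound with
constant `D` for all bounded Lipschitz functions, then it satisfies it with the same `D`
for all Lipschitz functions (in particular `e^{±f}` are integrable). -/
theorem gcb_bounded_to_all_lipschitz {Ω : Type*} [NormedAddCommGroup Ω] [NormedSpace ℝ Ω]
    [CompleteSpace Ω] [TopologicalSpace.SeparableSpace Ω] [MeasurableSpace Ω] [BorelSpace Ω]
    (μ : Measure Ω) [IsProbabilityMeasure μ] (D : ℝ) (hD : 0 < D)
    (hGCB : ∀ (L : NNReal) (f : Ω → ℝ), LipschitzWith L f → (∃ C, ∀ x, |f x| ≤ C) →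
      ∫ x, Real.exp (f x - ∫ y, f y ∂μ) ∂μ ≤ Real.exp (D * (L : ℝ) ^ 2))
    (L : NNReal) (f : Ω → ℝ) (hf : LipschitzWith L f) :
    Integrable f μ ∧ Integrable (fun x => Real.exp (f x)) μ ∧
    Integrable (fun x => Real.exp (-f x)) μ ∧
    ∫ x, Real.exp (f x - ∫ y, f y ∂μ) ∂μ ≤ Real.exp (D * (L : ℝ) ^ 2) := by
  have h1 : Integrable (fun x => Real.exp (f x)) μ :=
    gcb_exp_integrable_aux μ D hGCB L f hf
  have hnegL : LipschitzWith L (fun x => -f x) := LipschitzWith.neg hf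
  have h2 : Integrable (fun x => Real.exp (-f x)) μ :=
    gcb_exp_integrable_aux μ D hGCB L (fun x => -f x) hnegL
  have habs : ∀ t : ℝ, |t| ≤ Real.exp t + Real.exp (-t) := by
    intro t
    rcases le_total 0 t with h | h
    · rw [abs_of_nonneg h]
      linarith [Real.add_one_le_exp t, Real.exp_pos (-t)]
    · rw [abs_of_nonpos h]
      linarith [Real.add_one_le_exp (-t), Real.exp_pos t]
  have hfint : Integrable f μ := by
    refine (h1.add h2).mono' hf.continuous.aestronglyMeasurable ?_
    exact ae_of_all _ fun x => by rw [Real.norm_eq_abs]; exact habs (f x)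
  refine ⟨hfint, h1, h2, ?_⟩
  -- the truncation machinery again
  set E := Real.exp (D * (L : ℝ) ^ 2) with hEdef
  set g : ℕ → Ω → ℝ := fun n x => max (-(n : ℝ)) (min (f x) n) with hgdef
  have hgL : ∀ n, LipschitzWith L (g n) := fun n => (hf.min_const _).const_max _
  have hgb : ∀ n x, |g n x| ≤ (n : ℝ) := by
    intro n x
    rw [abs_le]
    exact ⟨le_max_left _ _, max_le (by simp [neg_le_self (Nat.cast_nonneg n : (0:ℝ) ≤ n)])
      (min_le_right _ _)⟩
  have hgf : ∀ n x, |g n x| ≤ |f x| := by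
    intro n x
    rw [abs_le]
    constructor
    · rcases le_total (|f x|) (n : ℝ) with h | h
      · have h1 : f x ≤ (n : ℝ) := (le_abs_self _).trans h
        have h2 : -|f x| ≤ f x := neg_abs_le _
        calc -|f x| ≤ min (f x) n := le_min h2 (h2.trans h1)
          _ ≤ _ := le_max_right _ _
      · exact le_trans (neg_le_neg h) (le_max_left _ _)
    · refine max_le ((neg_nonpos.2 (Nat.cast_nonneg n)).trans (abs_nonneg _))
        ((min_le_left _ _).trans (le_abs_self _))
  have hgcont : ∀ n, Continuous (g n) := fun n => (hgL n).continuous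
  have hgint : ∀ n, Integrable (g n) μ := by
    intro n
    refine hfint.abs.mono' (hgcont n).aestronglyMeasurable ?_
    exact ae_of_all _ fun x => by rw [Real.norm_eq_abs]; exact hgf n x
  set I : ℕ → ℝ := fun n => ∫ x, g n x ∂μ with hIdef
  have hGCB1 : ∀ n, ∫ x, Real.exp (g n x - I n) ∂μ ≤ E :=
    fun n => hGCB L (g n) (hgL n) ⟨n, hgb n⟩
  have hconvx : ∀ x, Filter.Tendsto (fun n => g n x) Filter.atTop (nhds (f x)) := by
    intro x
    refine tendsto_const_nhds.congr' ?_
    filter_upwards [Filter.eventually_ge_atTop ⌈|f x|⌉₊] with n hn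
    have hn' : |f x| ≤ (n : ℝ) := (Nat.le_ceil _).trans (Nat.cast_le.2 hn)
    have ha1 : f x ≤ (n : ℝ) := (le_abs_self _).trans hn'
    have ha2 : -(n : ℝ) ≤ f x := by have := neg_abs_le (f x); linarith
    simp only [hgdef]
    rw [min_eq_left ha1, max_eq_right ha2]
  set K := ∫ x, |f x| ∂μ with hKdef
  have hIK : ∀ n, |I n| ≤ K := by
    intro n
    calc |I n| ≤ ∫ x, |g n x| ∂μ := by
          simpa [Real.norm_eq_abs] using norm_integral_le_integral_norm (μ := μ) (g n)
      _ ≤ ∫ x, |f x| ∂μ := integral_mono (hgint n).abs hfint.abs fun x => hgf n x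
  have hIlim : Filter.Tendsto I Filter.atTop (nhds (∫ x, f x ∂μ)) := by
    refine tendsto_integral_of_dominated_convergence (fun x => |f x|)
      (fun n => (hgint n).aestronglyMeasurable) hfint.abs
      (fun n => ae_of_all _ fun x => by rw [Real.norm_eq_abs]; exact hgf n x)
      (ae_of_all _ fun x => hconvx x)
  have hdomint : Integrable (fun x => Real.exp K * (Real.exp (f x) + Real.exp (-f x))) μ :=
    (h1.add h2).const_mul _
  have hbound : ∀ n, ∀ x, ‖Real.exp (g n x - I n)‖ ≤
      Real.exp K * (Real.exp (f x) + Real.exp (-f x)) := by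
    intro n x
    rw [Real.norm_eq_abs, abs_of_pos (Real.exp_pos _)]
    have h3 : g n x - I n ≤ |f x| + K := by
      have := abs_le.1 (hgf n x)
      have := abs_le.1 (hIK n)
      linarith [this.1, this.2]
    calc Real.exp (g n x - I n) ≤ Real.exp (|f x| + K) := Real.exp_le_exp.2 h3
      _ = Real.exp K * Real.exp (|f x|) := by rw [← Real.exp_add]; ring_nf
      _ ≤ Real.exp K * (Real.exp (f x) + Real.exp (-f x)) := by
          refine mul_le_mul_of_nonneg_left ?_ (Real.exp_pos _).le
          rcases abs_cases (f x) with ⟨h, _⟩ | ⟨h, _⟩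
          · rw [h]; linarith [Real.exp_pos (-f x)]
          · rw [h]; linarith [Real.exp_pos (f x)]
  have hmain : Filter.Tendsto (fun n => ∫ x, Real.exp (g n x - I n) ∂μ) Filter.atTop
      (nhds (∫ x, Real.exp (f x - ∫ y, f y ∂μ) ∂μ)) := by
    refine tendsto_integral_of_dominated_convergence
      (fun x => Real.exp K * (Real.exp (f x) + Real.exp (-f x)))
      (fun n => (((hgcont n).sub continuous_const).rexp).aestronglyMeasurable) hdomint
      (fun n => ae_of_all _ fun x => hbound n x)
      (ae_of_all _ fun x => ?_)
    exact (Real.continuous_exp.tendsto _).comp ((hconvx x).sub hIlim)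
  exact le_of_tendsto hmain (Filter.Eventually.of_forall fun n => hGCB1 n)
end
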